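/- Let ρ = Σ_{i=1}^4 λ_i|x_i⟩⟨x_i| on ℂ²⊗ℂ² (Bell-type basis x1,...,x4 as in the block spin-flip model) with λ_i > 0, Σλ_i = 1, λ2 = λ3, and λ1 > λ4. Let σ = σ^I ⊗ (a|ξ1⟩⟨ξ1| + b|ξ2⟩⟨ξ2|) with a,b ≥ 0, a+b=1. Then the operator E^d_0(σ) := λ̃1|y1⟩⟨y1| + λ̃4|y4⟩⟨y4| (the part of E^d(σ) supported on span{ξ1⊗ξ1, ξ2⊗ξ2}) satisfies ⟨ξ2⊗ξ2, E^d_0(σ) ξ1⊗ξ1⟩ ≠ 0, hence E^d_0(σ) is not a separable operator: it is not in the closed convex hull of products of positive operators A⊗B. -/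

import Mathlib

open Matrix Kronecker
open scoped ComplexOrder

/-- Partial trace over the first tensor factor. -/
noncomputable def ptrace1 {n m : ℕ} (M : Matrix (Fin n × Fin m) (Fin n × Fin m) ℂ) :
    Matrix (Fin m) (Fin m) ℂ :=
  fun j i => ∑ k : Fin n, M (k, j) (k, i)

/-- Tensor product of vectors. -/
noncomputable def vecTens {n m : ℕ} (x : Fin n → ℂ) (y : Fin m → ℂ) : Fin n × Fin m → ℂ :=
  fun p => x p.1 * y p.2

/-- Rank-one operator `|y⟩⟨z|`. -/
noncomputable def ketbra {d : Type*} (y z : d → ℂ) : Matrix d d ℂ :=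
  fun a b => y a * star (z b)

/-- The Bell-type basis `x1,x2,x3,x4` built from an orthonormal basis `ξ` of `ℂ²`. -/
noncomputable def bellBasis (ξ : Fin 2 → Fin 2 → ℂ) : Fin 4 → (Fin 2 × Fin 2 → ℂ) :=
  ![fun p => ((Real.sqrt 2 : ℝ) : ℂ)⁻¹ *
      (vecTens (ξ 0) (ξ 0) p + vecTens (ξ 1) (ξ 1) p),
    vecTens (ξ 0) (ξ 1),
    vecTens (ξ 1) (ξ 0),
    fun p => ((Real.sqrt 2 : ℝ) : ℂ)⁻¹ *
      (vecTens (ξ 0) (ξ 0) p - vecTens (ξ 1) (ξ 1) p)]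

/-- The density matrix `ρ = Σ λᵢ |xᵢ⟩⟨xᵢ|`. -/
noncomputable def rhoBell (ξ : Fin 2 → Fin 2 → ℂ) (lam : Fin 4 → ℝ) :
    Matrix (Fin 2 × Fin 2) (Fin 2 × Fin 2) ℂ :=
  ∑ i : Fin 4, ((lam i : ℝ) : ℂ) • ketbra (bellBasis ξ i) (bellBasis ξ i)

noncomputable def Aq (lam : Fin 4 → ℝ) (a b : ℝ) : ℝ :=
  a * (Real.sqrt (lam 0) + Real.sqrt (lam 3)) ^ 2 +
    b * (Real.sqrt (lam 0) - Real.sqrt (lam 3)) ^ 2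

noncomputable def Bq (lam : Fin 4 → ℝ) : ℝ := lam 0 - lam 3

noncomputable def Cq (lam : Fin 4 → ℝ) (a b : ℝ) : ℝ :=
  a * (Real.sqrt (lam 0) - Real.sqrt (lam 3)) ^ 2 +
    b * (Real.sqrt (lam 0) + Real.sqrt (lam 3)) ^ 2

noncomputable def Xq (lam : Fin 4 → ℝ) (a b : ℝ) : ℝ :=
  Real.sqrt ((Aq lam a b - Cq lam a b) ^ 2 + 4 * Bq lam ^ 2)

/-- `χ = ((λ1+λ4)/2 + λ2)⁻¹` (with `λ2 = λ3`). -/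
noncomputable def chiq (lam : Fin 4 → ℝ) : ℝ := ((lam 0 + lam 3) / 2 + lam 1)⁻¹

noncomputable def lamPlus (lam : Fin 4 → ℝ) (a b : ℝ) : ℝ :=
  (Aq lam a b + Cq lam a b + Xq lam a b) / 2

noncomputable def lamMinus (lam : Fin 4 → ℝ) (a b : ℝ) : ℝ :=
  (Aq lam a b + Cq lam a b - Xq lam a b) / 2

noncomputable def etaPlus (lam : Fin 4 → ℝ) (a b : ℝ) : ℝ :=
  Real.sqrt 2 * Bq lam /
    Real.sqrt (Xq lam a b ^ 2 - (Aq lam a b - Cq lam a b) * Xq lam a b)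

noncomputable def kappaPlus (lam : Fin 4 → ℝ) (a b : ℝ) : ℝ :=
  (-(Aq lam a b - Cq lam a b) + Xq lam a b) /
    (Real.sqrt 2 * Real.sqrt (Xq lam a b ^ 2 - (Aq lam a b - Cq lam a b) * Xq lam a b))

noncomputable def etaMinus (lam : Fin 4 → ℝ) (a b : ℝ) : ℝ :=
  Real.sqrt 2 * Bq lam /
    Real.sqrt (Xq lam a b ^ 2 + (Aq lam a b - Cq lam a b) * Xq lam a b)

noncomputable def kappaMinus (lam : Fin 4 → ℝ) (a b : ℝ) : ℝ :=
  (-(Aq lam a b - Cq lam a b) - Xq lam a b) /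
    (Real.sqrt 2 * Real.sqrt (Xq lam a b ^ 2 + (Aq lam a b - Cq lam a b) * Xq lam a b))

/-- `y1 = η₊ ξ1⊗ξ1 + κ₊ ξ2⊗ξ2`. -/
noncomputable def y1v (ξ : Fin 2 → Fin 2 → ℂ) (lam : Fin 4 → ℝ) (a b : ℝ) :
    Fin 2 × Fin 2 → ℂ :=
  fun p => ((etaPlus lam a b : ℝ) : ℂ) * vecTens (ξ 0) (ξ 0) p +
    ((kappaPlus lam a b : ℝ) : ℂ) * vecTens (ξ 1) (ξ 1) p

/-- `y4 = η₋ ξ1⊗ξ1 + κ₋ ξ2⊗ξ2`. -/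
noncomputable def y4v (ξ : Fin 2 → Fin 2 → ℂ) (lam : Fin 4 → ℝ) (a b : ℝ) :
    Fin 2 × Fin 2 → ℂ :=
  fun p => ((etaMinus lam a b : ℝ) : ℂ) * vecTens (ξ 0) (ξ 0) p +
    ((kappaMinus lam a b : ℝ) : ℂ) * vecTens (ξ 1) (ξ 1) p

/-- `E^d_0(σ) = λ̃1 |y1⟩⟨y1| + λ̃4 |y4⟩⟨y4|` with `λ̃1 = χλ₊`, `λ̃4 = χλ₋`. -/
noncomputable def Ed0 (ξ : Fin 2 → Fin 2 → ℂ) (lam : Fin 4 → ℝ) (a b : ℝ) :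
    Matrix (Fin 2 × Fin 2) (Fin 2 × Fin 2) ℂ :=
  ((chiq lam * lamPlus lam a b : ℝ) : ℂ) •
      ketbra (y1v ξ lam a b) (y1v ξ lam a b) +
    ((chiq lam * lamMinus lam a b : ℝ) : ℂ) •
      ketbra (y4v ξ lam a b) (y4v ξ lam a b)

/-- The set of separable operators: closure of finite sums `Σ Aⱼ⊗Bⱼ` with `Aⱼ, Bⱼ ≥ 0`. -/
noncomputable def SepCl : Set (Matrix (Fin 2 × Fin 2) (Fin 2 × Fin 2) ℂ) :=
  closure {S | ∃ (N : ℕ) (A B : Fin N → Matrix (Fin 2) (Fin 2) ℂ),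
    (∀ j, (A j).PosSemidef) ∧ (∀ j, (B j).PosSemidef) ∧ S = ∑ j, A j ⊗ₖ B j}

section Aux

lemma dot_ketbra {d : Type*} [Fintype d] (u y z w : d → ℂ) :
    star u ⬝ᵥ (ketbra y z) *ᵥ w = (∑ p, star (u p) * y p) * (∑ q, star (z q) * w q) := by
  rw [Finset.sum_mul_sum]
  simp only [dotProduct, Matrix.mulVec, ketbra, Pi.star_apply, Finset.mul_sum]
  refine Finset.sum_congr rfl fun p _ => Finset.sum_congr rfl fun q _ => by ring

lemma tens_sum (x y z w : Fin 2 → ℂ) :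
    (∑ p : Fin 2 × Fin 2, star (vecTens x y p) * vecTens z w p)
      = (∑ k, star (x k) * z k) * (∑ l, star (y l) * w l) := by
  rw [Finset.sum_mul_sum, Fintype.sum_prod_type]
  refine Finset.sum_congr rfl fun k _ => Finset.sum_congr rfl fun l _ => by
    simp [vecTens, star_mul']; ring

/-- Partial transpose on the first factor. -/
noncomputable def ptransM (S : Matrix (Fin 2 × Fin 2) (Fin 2 × Fin 2) ℂ) :
    Matrix (Fin 2 × Fin 2) (Fin 2 × Fin 2) ℂ := fun p q => S (q.1, p.2) (p.1, q.2)

lemma ptransM_kron (A B : Matrix (Fin 2) (Fin 2) ℂ) : ptransM (A ⊗ₖ B) = Aᵀ ⊗ₖ B := by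
  ext p q
  simp [ptransM, Matrix.kroneckerMap_apply]

lemma ptransM_sum {N : ℕ} (f : Fin N → Matrix (Fin 2 × Fin 2) (Fin 2 × Fin 2) ℂ) :
    ptransM (∑ j, f j) = ∑ j, ptransM (f j) := by
  ext p q; simp [ptransM, Matrix.sum_apply]

lemma ptransM_add (M N : Matrix (Fin 2 × Fin 2) (Fin 2 × Fin 2) ℂ) :
    ptransM (M + N) = ptransM M + ptransM N := by
  ext p q; simp [ptransM]

lemma ptransM_smul (c : ℂ) (M : Matrix (Fin 2 × Fin 2) (Fin 2 × Fin 2) ℂ) :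
    ptransM (c • M) = c • ptransM M := by
  ext p q; simp [ptransM]

lemma conjTranspose_kron {l m n o : Type*} (A : Matrix l m ℂ) (B : Matrix n o ℂ) :
    (A ⊗ₖ B)ᴴ = Aᴴ ⊗ₖ Bᴴ := by
  ext p q
  simp [Matrix.conjTranspose_apply, Matrix.kroneckerMap_apply, star_mul']

lemma kron_psd {A B : Matrix (Fin 2) (Fin 2) ℂ} (hA : A.PosSemidef) (hB : B.PosSemidef) :
    (A ⊗ₖ B).PosSemidef := by
  exact hA.kronecker hB

lemma ptransM_ketbra (u w u' w' : Fin 2 → ℂ) :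
    ptransM (ketbra (vecTens u w) (vecTens u' w'))
      = ketbra (vecTens (star ∘ u') w) (vecTens (star ∘ u) w') := by
  ext p q
  simp [ptransM, ketbra, vecTens, star_mul', Function.comp]
  ring

end Aux

section Aux2

lemma sum_psd {d : Type*} [Fintype d] [DecidableEq d] {N : ℕ}
    (f : Fin N → Matrix d d ℂ) (h : ∀ j, (f j).PosSemidef) : (∑ j, f j).PosSemidef :=
  Finset.sum_induction f Matrix.PosSemidef (fun _ _ ha hb => ha.add hb)
    Matrix.PosSemidef.zero (fun i _ => h i)

lemma core_real (A C B X lp lm e k e' k' : ℝ) (hB : 0 < B)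
    (hX : X = Real.sqrt ((A - C)^2 + 4*B^2))
    (hlp : lp = (A + C + X)/2) (hlm : lm = (A + C - X)/2)
    (he : e = Real.sqrt 2 * B / Real.sqrt (X^2 - (A-C)*X))
    (hk : k = (-(A-C)+X)/(Real.sqrt 2 * Real.sqrt (X^2 - (A-C)*X)))
    (he' : e' = Real.sqrt 2 * B / Real.sqrt (X^2 + (A-C)*X))
    (hk' : k' = (-(A-C)-X)/(Real.sqrt 2 * Real.sqrt (X^2 + (A-C)*X))) :
    lp * (e * k) + lm * (e' * k') = B := by
  subst he hk he' hk'
  have h2 : (0:ℝ) < Real.sqrt 2 := by positivity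
  have hXsq : X^2 = (A-C)^2 + 4*B^2 := by
    rw [hX, Real.sq_sqrt]; positivity
  have hXpos : 0 < X := by
    rw [hX]; apply Real.sqrt_pos.2; nlinarith
  have h1 : 0 < X - (A-C) := by nlinarith
  have h3 : 0 < X + (A-C) := by nlinarith
  have hDp : X^2 - (A-C)*X = X * (X - (A-C)) := by ring
  have hDm : X^2 + (A-C)*X = X * (X + (A-C)) := by ring
  have hDppos : 0 < X^2 - (A-C)*X := by rw [hDp]; positivity
  have hDmpos : 0 < X^2 + (A-C)*X := by rw [hDm]; positivity
  have hsp : Real.sqrt (X^2 - (A-C)*X) * Real.sqrt (X^2 - (A-C)*X) = X^2 - (A-C)*X :=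
    Real.mul_self_sqrt hDppos.le
  have hsm : Real.sqrt (X^2 + (A-C)*X) * Real.sqrt (X^2 + (A-C)*X) = X^2 + (A-C)*X :=
    Real.mul_self_sqrt hDmpos.le
  have hsppos : 0 < Real.sqrt (X^2 - (A-C)*X) := Real.sqrt_pos.2 hDppos
  have hsmpos : 0 < Real.sqrt (X^2 + (A-C)*X) := Real.sqrt_pos.2 hDmpos
  have e1 : (Real.sqrt 2 * B / Real.sqrt (X^2 - (A-C)*X)) *
      ((-(A-C)+X)/(Real.sqrt 2 * Real.sqrt (X^2 - (A-C)*X))) = B / X := by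
    rw [div_mul_div_comm, div_eq_div_iff (by positivity) hXpos.ne']
    have : Real.sqrt (X ^ 2 - (A - C) * X) * (Real.sqrt 2 * Real.sqrt (X ^ 2 - (A - C) * X))
        = Real.sqrt 2 * (X * (X - (A-C))) := by
      rw [mul_left_comm, hsp, hDp]
    rw [this]; ring
  have e2 : (Real.sqrt 2 * B / Real.sqrt (X^2 + (A-C)*X)) *
      ((-(A-C)-X)/(Real.sqrt 2 * Real.sqrt (X^2 + (A-C)*X))) = -(B / X) := by
    rw [div_mul_div_comm, div_eq_iff (by positivity)]
    have : Real.sqrt (X ^ 2 + (A - C) * X) * (Real.sqrt 2 * Real.sqrt (X ^ 2 + (A - C) * X))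
        = Real.sqrt 2 * (X * (X + (A-C))) := by
      rw [mul_left_comm, hsm, hDm]
    rw [this]; field_simp; ring
  rw [e1, e2, hlp, hlm]
  field_simp
  ring

lemma keyK (lam : Fin 4 → ℝ) (a b : ℝ) (hB : 0 < Bq lam) :
    lamPlus lam a b * (etaPlus lam a b * kappaPlus lam a b)
      + lamMinus lam a b * (etaMinus lam a b * kappaMinus lam a b) = Bq lam :=
  core_real (Aq lam a b) (Cq lam a b) (Bq lam) (Xq lam a b)
    (lamPlus lam a b) (lamMinus lam a b) (etaPlus lam a b) (kappaPlus lam a b)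
    (etaMinus lam a b) (kappaMinus lam a b) hB rfl rfl rfl rfl rfl rfl rfl

lemma sum_mul_const {d : Type*} [Fintype d] (u v : d → ℂ) (c : ℂ) :
    (∑ p, star (u p) * (c * v p)) = c * ∑ p, star (u p) * v p := by
  rw [Finset.mul_sum]; exact Finset.sum_congr rfl fun p _ => by ring

lemma sum_const_mul {d : Type*} [Fintype d] (u v : d → ℂ) (c : ℂ) :
    (∑ q, star (c * u q) * v q) = star c * ∑ q, star (u q) * v q := by
  rw [Finset.mul_sum]
  exact Finset.sum_congr rfl fun q _ => by rw [star_mul']; ring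

/-- The witness vector `ξ̄1 ⊗ ξ2 - ξ̄2 ⊗ ξ1`. -/
noncomputable def vwit (ξ : Fin 2 → Fin 2 → ℂ) : Fin 2 × Fin 2 → ℂ :=
  fun p => vecTens (star ∘ ξ 0) (ξ 1) p - vecTens (star ∘ ξ 1) (ξ 0) p

end Aux2

section Aux3

variable (ξ : Fin 2 → Fin 2 → ℂ)

lemma tens' (hξ : ∀ i j, (∑ k, star (ξ i k) * ξ j k) = if i = j then 1 else 0)
    (a b c d : Fin 2) :
    (∑ p : Fin 2 × Fin 2, star (vecTens (star ∘ ξ a) (ξ b) p) * vecTens (star ∘ ξ c) (ξ d) p)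
      = (if c = a then 1 else 0) * (if b = d then 1 else 0) := by
  rw [tens_sum]
  congr 1
  · rw [← hξ c a]
    refine Finset.sum_congr rfl fun k _ => ?_
    simp only [Function.comp_apply, star_star]
    ring
  · exact hξ b d

lemma vwit_split (Y : Fin 2 × Fin 2 → ℂ) :
    (∑ p, star (vwit ξ p) * Y p)
      = (∑ p, star (vecTens (star ∘ ξ 0) (ξ 1) p) * Y p)
        - (∑ p, star (vecTens (star ∘ ξ 1) (ξ 0) p) * Y p) := by
  rw [← Finset.sum_sub_distrib]
  refine Finset.sum_congr rfl fun p _ => ?_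
  simp [vwit, sub_mul]

lemma vwit_split' (Z : Fin 2 × Fin 2 → ℂ) :
    (∑ q, star (Z q) * vwit ξ q)
      = (∑ q, star (Z q) * vecTens (star ∘ ξ 0) (ξ 1) q)
        - (∑ q, star (Z q) * vecTens (star ∘ ξ 1) (ξ 0) q) := by
  rw [← Finset.sum_sub_distrib]
  refine Finset.sum_congr rfl fun q _ => ?_
  simp [vwit, mul_sub]

lemma Fket (hξ : ∀ i j, (∑ k, star (ξ i k) * ξ j k) = if i = j then 1 else 0)
    (α β : ℝ) :
    star (vwit ξ) ⬝ᵥ (ptransM (ketbra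
        (fun p => ((α : ℝ) : ℂ) * vecTens (ξ 0) (ξ 0) p + ((β : ℝ) : ℂ) * vecTens (ξ 1) (ξ 1) p)
        (fun p => ((α : ℝ) : ℂ) * vecTens (ξ 0) (ξ 0) p + ((β : ℝ) : ℂ) * vecTens (ξ 1) (ξ 1) p))) *ᵥ
      (vwit ξ) = ((-2 * α * β : ℝ) : ℂ) := by
  have hkb : ketbra
      (fun p => ((α : ℝ) : ℂ) * vecTens (ξ 0) (ξ 0) p + ((β : ℝ) : ℂ) * vecTens (ξ 1) (ξ 1) p)
      (fun p => ((α : ℝ) : ℂ) * vecTens (ξ 0) (ξ 0) p + ((β : ℝ) : ℂ) * vecTens (ξ 1) (ξ 1) p)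
    = (((α*α : ℝ) : ℂ)) • ketbra (vecTens (ξ 0) (ξ 0)) (vecTens (ξ 0) (ξ 0))
      + (((α*β : ℝ) : ℂ)) • ketbra (vecTens (ξ 0) (ξ 0)) (vecTens (ξ 1) (ξ 1))
      + (((β*α : ℝ) : ℂ)) • ketbra (vecTens (ξ 1) (ξ 1)) (vecTens (ξ 0) (ξ 0))
      + (((β*β : ℝ) : ℂ)) • ketbra (vecTens (ξ 1) (ξ 1)) (vecTens (ξ 1) (ξ 1)) := by
    ext p q
    simp only [ketbra, Matrix.add_apply, Matrix.smul_apply, smul_eq_mul, star_add, star_mul',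
      Complex.star_def, Complex.conj_ofReal]
    push_cast
    ring
  rw [hkb, ptransM_add, ptransM_add, ptransM_add, ptransM_smul, ptransM_smul, ptransM_smul,
    ptransM_smul, ptransM_ketbra, ptransM_ketbra, ptransM_ketbra, ptransM_ketbra,
    Matrix.add_mulVec, Matrix.add_mulVec, Matrix.add_mulVec,
    Matrix.smul_mulVec, Matrix.smul_mulVec, Matrix.smul_mulVec,
    Matrix.smul_mulVec, dotProduct_add, dotProduct_add,
    dotProduct_add, dotProduct_smul, dotProduct_smul,
    dotProduct_smul, dotProduct_smul,
    dot_ketbra, dot_ketbra, dot_ketbra, dot_ketbra,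
    vwit_split ξ, vwit_split ξ, vwit_split ξ, vwit_split ξ,
    vwit_split' ξ, vwit_split' ξ, vwit_split' ξ, vwit_split' ξ]
  simp only [tens' ξ hξ]
  norm_num
  ring

end Aux3

/-- `⟨ξ2⊗ξ2, E^d_0(σ) ξ1⊗ξ1⟩ ≠ 0`, and `E^d_0(σ)` is not in the closed
convex hull of products of positive operators. -/
theorem Ed0_entangled (ξ : Fin 2 → Fin 2 → ℂ)
    (hξ : ∀ i j, (∑ k, star (ξ i k) * ξ j k) = if i = j then 1 else 0)
    (lam : Fin 4 → ℝ) (hpos : ∀ i, 0 < lam i) (hsum : ∑ i, lam i = 1)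
    (h23 : lam 1 = lam 2) (h14 : lam 3 < lam 0)
    (a b : ℝ) (ha : 0 ≤ a) (hb : 0 ≤ b) (hab : a + b = 1)
    (σI : Matrix (Fin 2) (Fin 2) ℂ) (hσI : σI.PosSemidef) (hσItr : σI.trace = 1) :
    (star (vecTens (ξ 1) (ξ 1)) ⬝ᵥ (Ed0 ξ lam a b).mulVec (vecTens (ξ 0) (ξ 0)) ≠ 0) ∧
      Ed0 ξ lam a b ∉ SepCl := by
  have h00 : (∑ k, star (ξ 0 k) * ξ 0 k) = 1 := by simpa using hξ 0 0
  have h01 : (∑ k, star (ξ 0 k) * ξ 1 k) = 0 := by simpa using hξ 0 1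
  have h10 : (∑ k, star (ξ 1 k) * ξ 0 k) = 0 := by simpa using hξ 1 0
  have h11 : (∑ k, star (ξ 1 k) * ξ 1 k) = 1 := by simpa using hξ 1 1
  have hB : 0 < Bq lam := by simp only [Bq]; linarith
  have hchi : 0 < chiq lam := by
    have := hpos 0; have := hpos 1; have := hpos 3
    apply inv_pos.2; linarith
  have hkey := keyK lam a b hB
  constructor
  · -- the matrix entry computation
    have S1 : (∑ p, star (vecTens (ξ 1) (ξ 1) p) * y1v ξ lam a b p)
        = ((kappaPlus lam a b : ℝ) : ℂ) := by
      simp only [y1v, mul_add, Finset.sum_add_distrib, sum_mul_const, tens_sum,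
        h10, h11]
      ring
    have S1' : (∑ p, star (vecTens (ξ 1) (ξ 1) p) * y4v ξ lam a b p)
        = ((kappaMinus lam a b : ℝ) : ℂ) := by
      simp only [y4v, mul_add, Finset.sum_add_distrib, sum_mul_const, tens_sum,
        h10, h11]
      ring
    have conj_trick : ∀ u w : Fin 2 × Fin 2 → ℂ,
        (∑ q, star (u q) * w q) = star (∑ q, star (w q) * u q) := by
      intro u w
      rw [star_sum]
      refine Finset.sum_congr rfl fun q _ => ?_
      rw [star_mul', star_star, mul_comm]
    have S2 : (∑ q, star (y1v ξ lam a b q) * vecTens (ξ 0) (ξ 0) q)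
        = ((etaPlus lam a b : ℝ) : ℂ) := by
      rw [conj_trick]
      have : (∑ q, star (vecTens (ξ 0) (ξ 0) q) * y1v ξ lam a b q)
          = ((etaPlus lam a b : ℝ) : ℂ) := by
        simp only [y1v, mul_add, Finset.sum_add_distrib, sum_mul_const, tens_sum, h00, h01]
        ring
      rw [this, Complex.star_def, Complex.conj_ofReal]
    have S2' : (∑ q, star (y4v ξ lam a b q) * vecTens (ξ 0) (ξ 0) q)
        = ((etaMinus lam a b : ℝ) : ℂ) := by
      rw [conj_trick]
      have : (∑ q, star (vecTens (ξ 0) (ξ 0) q) * y4v ξ lam a b q)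
          = ((etaMinus lam a b : ℝ) : ℂ) := by
        simp only [y4v, mul_add, Finset.sum_add_distrib, sum_mul_const, tens_sum, h00, h01]
        ring
      rw [this, Complex.star_def, Complex.conj_ofReal]
    have hE : star (vecTens (ξ 1) (ξ 1)) ⬝ᵥ (Ed0 ξ lam a b).mulVec (vecTens (ξ 0) (ξ 0))
        = ((chiq lam * Bq lam : ℝ) : ℂ) := by
      show star (vecTens (ξ 1) (ξ 1)) ⬝ᵥ (Ed0 ξ lam a b) *ᵥ (vecTens (ξ 0) (ξ 0)) = _
      rw [Ed0, Matrix.add_mulVec, Matrix.smul_mulVec, Matrix.smul_mulVec,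
        dotProduct_add, dotProduct_smul, dotProduct_smul,
        dot_ketbra, dot_ketbra, S1, S1', S2, S2']
      have hreal : chiq lam * lamPlus lam a b * (kappaPlus lam a b * etaPlus lam a b)
          + chiq lam * lamMinus lam a b * (kappaMinus lam a b * etaMinus lam a b)
          = chiq lam * Bq lam := by linear_combination chiq lam * hkey
      simp only [smul_eq_mul]
      exact_mod_cast congrArg (fun r : ℝ => (r : ℂ)) hreal
    rw [hE]
    exact Complex.ofReal_ne_zero.2 (mul_pos hchi hB).ne'
  · -- not separable
    intro hmem
    have hcont : Continuous (fun S : Matrix (Fin 2 × Fin 2) (Fin 2 × Fin 2) ℂ =>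
        (star (vwit ξ) ⬝ᵥ (ptransM S) *ᵥ (vwit ξ)).re) := by
      apply Complex.continuous_re.comp
      simp only [dotProduct, Matrix.mulVec, ptransM]
      refine continuous_finset_sum _ fun p _ => Continuous.mul continuous_const ?_
      refine continuous_finset_sum _ fun q _ => Continuous.mul ?_ continuous_const
      exact (continuous_apply _).comp (continuous_apply _)
    have hsub : {S : Matrix (Fin 2 × Fin 2) (Fin 2 × Fin 2) ℂ |
          ∃ (N : ℕ) (A B : Fin N → Matrix (Fin 2) (Fin 2) ℂ),
            (∀ j, (A j).PosSemidef) ∧ (∀ j, (B j).PosSemidef) ∧ S = ∑ j, A j ⊗ₖ B j}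
        ⊆ {S | 0 ≤ (star (vwit ξ) ⬝ᵥ (ptransM S) *ᵥ (vwit ξ)).re} := by
      rintro S ⟨N, A, B, hA, hBp, rfl⟩
      have hpsd : (ptransM (∑ j, A j ⊗ₖ B j)).PosSemidef := by
        rw [ptransM_sum]
        refine sum_psd _ fun j => ?_
        rw [ptransM_kron]
        exact kron_psd (hA j).transpose (hBp j)
      simpa using hpsd.re_dotProduct_nonneg (vwit ξ)
    have hge : 0 ≤ (star (vwit ξ) ⬝ᵥ (ptransM (Ed0 ξ lam a b)) *ᵥ (vwit ξ)).re := by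
      have hcl := closure_minimal hsub (isClosed_le continuous_const hcont)
      exact hcl hmem
    have hF : star (vwit ξ) ⬝ᵥ (ptransM (Ed0 ξ lam a b)) *ᵥ (vwit ξ)
        = ((-2 * (chiq lam * Bq lam) : ℝ) : ℂ) := by
      rw [Ed0, ptransM_add, ptransM_smul, ptransM_smul, Matrix.add_mulVec,
        Matrix.smul_mulVec, Matrix.smul_mulVec, dotProduct_add,
        dotProduct_smul, dotProduct_smul]
      rw [show y1v ξ lam a b = fun p => ((etaPlus lam a b : ℝ) : ℂ) * vecTens (ξ 0) (ξ 0) p +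
          ((kappaPlus lam a b : ℝ) : ℂ) * vecTens (ξ 1) (ξ 1) p from rfl,
        show y4v ξ lam a b = fun p => ((etaMinus lam a b : ℝ) : ℂ) * vecTens (ξ 0) (ξ 0) p +
          ((kappaMinus lam a b : ℝ) : ℂ) * vecTens (ξ 1) (ξ 1) p from rfl,
        Fket ξ hξ, Fket ξ hξ]
      have hreal2 : chiq lam * lamPlus lam a b * (-2 * etaPlus lam a b * kappaPlus lam a b)
          + chiq lam * lamMinus lam a b * (-2 * etaMinus lam a b * kappaMinus lam a b)
          = -2 * (chiq lam * Bq lam) := by linear_combination (-2 * chiq lam) * hkey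
      simp only [smul_eq_mul]
      exact_mod_cast congrArg (fun r : ℝ => (r : ℂ)) hreal2
    rw [hF] at hge
    have : (0:ℝ) < 2 * (chiq lam * Bq lam) := by positivity
    rw [Complex.ofReal_re] at hge
    linarith
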